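/- Let Θ be a finite set, let P_i and P_j be probability mass functions on Θ with ‖P_i − P_j‖_TV ≤ ε_π, and let L_i, L_j : Θ → ℝ satisfy 0 ≤ L_k(θ) ≤ M and |L_i(θ) − L_j(θ)| ≤ ε_ℓ for all θ ∈ Θ and k ∈ {i,j}. Set Z_k = ∑_{θ∈Θ} L_k(θ) P_k(θ) and q_k(θ) = L_k(θ) P_k(θ) / Z_k, and assume Z_i ≥ ζ and Z_j ≥ ζ for some ζ > 0. Then the posteriors satisfy ‖q_i − q_j‖_TV ≤ (2 M ε_π + ε_ℓ) / ζ. -/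

import Mathlib

open Finset

/-- **ε-Stability of Role Posteriors.** If the priors are ε_π-close in total
variation, the likelihoods are bounded by `M` and pointwise ε_ℓ-close, and both
evidences are lower-bounded by `ζ > 0`, then the normalized posteriors are
`(2 M ε_π + ε_ℓ) / ζ`-close in total variation. -/
theorem posterior_tv_bound {Θ : Type*} [Fintype Θ]
    (Pi Pj Li Lj : Θ → ℝ) (M επ εℓ ζ : ℝ)
    (hPi0 : ∀ θ, 0 ≤ Pi θ) (hPi1 : ∑ θ, Pi θ = 1)
    (hPj0 : ∀ θ, 0 ≤ Pj θ) (hPj1 : ∑ θ, Pj θ = 1)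
    (hTV : (1 / 2) * ∑ θ, |Pi θ - Pj θ| ≤ επ)
    (hLi0 : ∀ θ, 0 ≤ Li θ) (hLiM : ∀ θ, Li θ ≤ M)
    (hLj0 : ∀ θ, 0 ≤ Lj θ) (hLjM : ∀ θ, Lj θ ≤ M)
    (hL : ∀ θ, |Li θ - Lj θ| ≤ εℓ)
    (hζ : 0 < ζ)
    (hZi : ζ ≤ ∑ θ, Li θ * Pi θ)
    (hZj : ζ ≤ ∑ θ, Lj θ * Pj θ) :
    (1 / 2) * ∑ θ, |Li θ * Pi θ / (∑ θ', Li θ' * Pi θ') -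
        Lj θ * Pj θ / (∑ θ', Lj θ' * Pj θ')| ≤ (2 * M * επ + εℓ) / ζ := by
  classical
  set Zi := ∑ θ, Li θ * Pi θ with hZidef
  set Zj := ∑ θ, Lj θ * Pj θ with hZjdef
  have hZi0 : 0 < Zi := lt_of_lt_of_le hζ hZi
  have hZj0 : 0 < Zj := lt_of_lt_of_le hζ hZj
  have hne : Nonempty Θ := by
    by_contra h
    rw [not_nonempty_iff] at h
    rw [hZidef] at hZi0
    simp at hZi0
  have hM : 0 ≤ M := le_trans (hLi0 (Classical.arbitrary Θ)) (hLiM (Classical.arbitrary Θ))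
  have hεℓ : 0 ≤ εℓ := le_trans (abs_nonneg _) (hL (Classical.arbitrary Θ))
  have hεπ : 0 ≤ επ := by
    have : (0:ℝ) ≤ ∑ θ, |Pi θ - Pj θ| := Finset.sum_nonneg fun θ _ => abs_nonneg _
    linarith
  have hTV2 : ∑ θ, |Pi θ - Pj θ| ≤ 2 * επ := by linarith
  set A := ∑ θ, |Li θ * Pi θ - Lj θ * Pj θ| with hAdef
  have hA : A ≤ 2 * M * επ + εℓ := by
    have h1 : A ≤ ∑ θ, (M * |Pi θ - Pj θ| + εℓ * Pj θ) := by
      apply Finset.sum_le_sum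
      intro θ _
      have heq : Li θ * Pi θ - Lj θ * Pj θ
          = Li θ * (Pi θ - Pj θ) + (Li θ - Lj θ) * Pj θ := by ring
      rw [heq]
      calc |Li θ * (Pi θ - Pj θ) + (Li θ - Lj θ) * Pj θ|
          ≤ |Li θ * (Pi θ - Pj θ)| + |(Li θ - Lj θ) * Pj θ| := abs_add_le _ _
        _ = |Li θ| * |Pi θ - Pj θ| + |Li θ - Lj θ| * |Pj θ| := by rw [abs_mul, abs_mul]
        _ ≤ M * |Pi θ - Pj θ| + εℓ * Pj θ := by
            rw [abs_of_nonneg (hLi0 θ), abs_of_nonneg (hPj0 θ)]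
            exact add_le_add (mul_le_mul_of_nonneg_right (hLiM θ) (abs_nonneg _))
              (mul_le_mul_of_nonneg_right (hL θ) (hPj0 θ))
    have h2 : ∑ θ, (M * |Pi θ - Pj θ| + εℓ * Pj θ)
        = M * (∑ θ, |Pi θ - Pj θ|) + εℓ * (∑ θ, Pj θ) := by
      rw [Finset.sum_add_distrib, Finset.mul_sum, Finset.mul_sum]
    have h3 : M * (∑ θ, |Pi θ - Pj θ|) ≤ M * (2 * επ) :=
      mul_le_mul_of_nonneg_left hTV2 hM
    rw [hPj1] at h2
    calc A ≤ M * (∑ θ, |Pi θ - Pj θ|) + εℓ * 1 := by rw [← h2]; exact h1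
      _ ≤ M * (2 * επ) + εℓ * 1 := by linarith
      _ = 2 * M * επ + εℓ := by ring
  have hZdiff : |Zj - Zi| ≤ A := by
    have : Zj - Zi = ∑ θ, (Lj θ * Pj θ - Li θ * Pi θ) := by
      rw [hZidef, hZjdef, Finset.sum_sub_distrib]
    rw [this]
    calc |∑ θ, (Lj θ * Pj θ - Li θ * Pi θ)| ≤ ∑ θ, |Lj θ * Pj θ - Li θ * Pi θ| :=
          Finset.abs_sum_le_sum_abs _ _
      _ = A := by rw [hAdef]; apply Finset.sum_congr rfl; intro θ _; rw [abs_sub_comm]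
  -- pointwise bound
  have hpt : ∀ θ, |Li θ * Pi θ / Zi - Lj θ * Pj θ / Zj|
      ≤ |Li θ * Pi θ - Lj θ * Pj θ| / Zi + Lj θ * Pj θ * |Zj - Zi| / (Zi * Zj) := by
    intro θ
    have heq : Li θ * Pi θ / Zi - Lj θ * Pj θ / Zj
        = (Li θ * Pi θ - Lj θ * Pj θ) / Zi + Lj θ * Pj θ * (Zj - Zi) / (Zi * Zj) := by
      field_simp
      ring
    rw [heq]
    have hb : 0 ≤ Lj θ * Pj θ := mul_nonneg (hLj0 θ) (hPj0 θ)
    calc |(Li θ * Pi θ - Lj θ * Pj θ) / Zi + Lj θ * Pj θ * (Zj - Zi) / (Zi * Zj)|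
        ≤ |(Li θ * Pi θ - Lj θ * Pj θ) / Zi| + |Lj θ * Pj θ * (Zj - Zi) / (Zi * Zj)| :=
          abs_add_le _ _
      _ = |Li θ * Pi θ - Lj θ * Pj θ| / Zi + Lj θ * Pj θ * |Zj - Zi| / (Zi * Zj) := by
          rw [abs_div, abs_div, abs_mul, abs_mul, abs_of_nonneg (hLj0 θ), abs_of_nonneg (hPj0 θ),
            abs_of_pos hZi0, abs_of_pos (mul_pos hZi0 hZj0)]
  have hsum : ∑ θ, |Li θ * Pi θ / Zi - Lj θ * Pj θ / Zj| ≤ A / Zi + |Zj - Zi| / Zi := by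
    calc ∑ θ, |Li θ * Pi θ / Zi - Lj θ * Pj θ / Zj|
        ≤ ∑ θ, (|Li θ * Pi θ - Lj θ * Pj θ| / Zi + Lj θ * Pj θ * |Zj - Zi| / (Zi * Zj)) :=
          Finset.sum_le_sum fun θ _ => hpt θ
      _ = A / Zi + Zj * |Zj - Zi| / (Zi * Zj) := by
          rw [Finset.sum_add_distrib, ← Finset.sum_div, ← hAdef]
          congr 1
          rw [← Finset.sum_div]
          congr 1
          rw [← Finset.sum_mul, ← hZjdef]
      _ = A / Zi + |Zj - Zi| / Zi := by
          congr 1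
          field_simp
  have hAZ : A / Zi ≤ (2 * M * επ + εℓ) / ζ :=
    div_le_div₀ (by positivity) hA hζ hZi
  have hBZ : |Zj - Zi| / Zi ≤ (2 * M * επ + εℓ) / ζ :=
    div_le_div₀ (by positivity) (le_trans hZdiff hA) hζ hZi
  linarith
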